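/- For every K ≥ 1 there exists a constant C depending only on K such that the following holds. Let T ∈ ℕ, η > 0, δ ∈ (0,1), and let v, ṽ ∈ ℝ^{n2} be unit vectors. Suppose: (i) both 𝒜 and Ã satisfy the RIP with constant δ; (ii) (1/m)·‖(Σ_i (A_i)_{1,1} O_i) v_⋆‖ ≤ 4√(n1/m) and (1/m)·‖(Σ_i (A_i)_{1,1} Õ_i) v_⋆‖ ≤ 4√(n1/m); (iii) (1/m)·‖(Σ_i (A_i)_{1,1} O_i) ṽ^⊥‖ ≤ K·√((log T + log η)/m)·‖ṽ^⊥‖ and (1/m)·‖(Σ_i (A_i)_{1,1} Õ_i) v^⊥‖ ≤ K·√((log T + log η)/m)·‖ṽ^⊥‖. Then ‖[(𝒜*𝒜 − Ã*Ã)(u_⋆v_⋆ᵀ)] ṽ‖ ≤ C·(√((log T + log η)/m) + √(n1/m)·‖ṽ^∥‖) + δ·‖v − ṽ‖. -/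

import Mathlib

open MeasureTheory ProbabilityTheory Matrix Finset
open scoped BigOperators ENNReal NNReal RealInnerProductSpace

noncomputable section

namespace ALSPaper

/-- View a plain vector as an element of Euclidean space. -/
def toE {n : ℕ} (x : Fin n → ℝ) : EuclideanSpace ℝ (Fin n) :=
  (WithLp.equiv 2 (Fin n → ℝ)).symm x

/-- View an element of Euclidean space as a plain vector. -/
def ofE {n : ℕ} (x : EuclideanSpace ℝ (Fin n)) : Fin n → ℝ :=
  WithLp.equiv 2 (Fin n → ℝ) x

/-- The first standard basis vector. -/
def e1 (n : ℕ) : EuclideanSpace ℝ (Fin n) :=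
  toE fun i => if (i : ℕ) = 0 then 1 else 0

/-- Frobenius inner product. -/
def frobInner {n1 n2 : ℕ} (A B : Matrix (Fin n1) (Fin n2) ℝ) : ℝ :=
  ∑ i, ∑ j, A i j * B i j

/-- Frobenius norm. -/
def frobNorm {n1 n2 : ℕ} (A : Matrix (Fin n1) (Fin n2) ℝ) : ℝ :=
  Real.sqrt (frobInner A A)

/-- The measurement operator. -/
def calA {n1 n2 m : ℕ} (A : Fin m → Matrix (Fin n1) (Fin n2) ℝ)
    (X : Matrix (Fin n1) (Fin n2) ℝ) : EuclideanSpace ℝ (Fin m) :=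
  toE fun i => (Real.sqrt m)⁻¹ * frobInner (A i) X

/-- The adjoint of the measurement operator. -/
def calAdj {n1 n2 m : ℕ} (A : Fin m → Matrix (Fin n1) (Fin n2) ℝ)
    (w : EuclideanSpace ℝ (Fin m)) : Matrix (Fin n1) (Fin n2) ℝ :=
  ∑ i, ((Real.sqrt m)⁻¹ * ofE w i) • A i

/-- The restricted isometry property (RIP) with constant `δ` (for rank ≤ 4). -/
def HasRIP {n1 n2 m : ℕ} (A : Fin m → Matrix (Fin n1) (Fin n2) ℝ) (δ : ℝ) : Prop :=
  ∀ Z : Matrix (Fin n1) (Fin n2) ℝ, Z.rank ≤ 4 →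
    (1 - δ) * frobNorm Z ^ 2 ≤ ‖calA A Z‖ ^ 2 ∧ ‖calA A Z‖ ^ 2 ≤ (1 + δ) * frobNorm Z ^ 2

/-- Component of `v` parallel to the first standard basis vector. -/
def par {n : ℕ} (v : EuclideanSpace ℝ (Fin n)) : EuclideanSpace ℝ (Fin n) :=
  ⟪e1 n, v⟫ • e1 n

/-- Component of `v` orthogonal to the first standard basis vector. -/
def perp {n : ℕ} (v : EuclideanSpace ℝ (Fin n)) : EuclideanSpace ℝ (Fin n) :=
  v - par v

/-- The "diagonal block" part of a measurement matrix. -/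
def Dmat {n1 n2 : ℕ} (A : Matrix (Fin n1) (Fin n2) ℝ) : Matrix (Fin n1) (Fin n2) ℝ :=
  vecMulVec (ofE (e1 n1)) (ofE (e1 n1)) * A * vecMulVec (ofE (e1 n2)) (ofE (e1 n2))
    + (1 - vecMulVec (ofE (e1 n1)) (ofE (e1 n1))) * A *
        (1 - vecMulVec (ofE (e1 n2)) (ofE (e1 n2)))

/-- The "off-diagonal block" part of a measurement matrix. -/
def Omat {n1 n2 : ℕ} (A : Matrix (Fin n1) (Fin n2) ℝ) : Matrix (Fin n1) (Fin n2) ℝ :=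
  vecMulVec (ofE (e1 n1)) (ofE (e1 n1)) * A * (1 - vecMulVec (ofE (e1 n2)) (ofE (e1 n2)))
    + (1 - vecMulVec (ofE (e1 n1)) (ofE (e1 n1))) * A * vecMulVec (ofE (e1 n2)) (ofE (e1 n2))

/-- The (1,1) entry of a matrix. -/
def ent11 {n1 n2 : ℕ} (A : Matrix (Fin n1) (Fin n2) ℝ) : ℝ :=
  frobInner (vecMulVec (ofE (e1 n1)) (ofE (e1 n2))) A

/-- Spectral (operator) norm of a matrix. -/
def specNorm {n1 n2 : ℕ} (M : Matrix (Fin n1) (Fin n2) ℝ) : ℝ :=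
  ‖LinearMap.toContinuousLinearMap (Matrix.toEuclideanLin M)‖

/-- The normal equation for the least-squares update. -/
def NormalEq {n1 n2 m : ℕ} (A : Fin m → Matrix (Fin n1) (Fin n2) ℝ)
    (u : EuclideanSpace ℝ (Fin n1)) (v : EuclideanSpace ℝ (Fin n2)) : Prop :=
  u = ⟪v, e1 n2⟫ • e1 n1 +
    toE (((vecMulVec (ofE u) (ofE v) - vecMulVec (ofE (e1 n1)) (ofE (e1 n2))) -
      calAdj A (calA A (vecMulVec (ofE u) (ofE v) - vecMulVec (ofE (e1 n1)) (ofE (e1 n2)))))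
        *ᵥ ofE v)

/-- sin of the angle between two vectors. -/
def sinAngle {n : ℕ} (a b : EuclideanSpace ℝ (Fin n)) : ℝ :=
  Real.sqrt (1 - ⟪a, b⟫ ^ 2 / (‖a‖ ^ 2 * ‖b‖ ^ 2))

/-- `c_t` sequence. -/
def cseq (n2 t : ℕ) : ℝ := (1 + 1 / Real.log n2) ^ t - 1

/-- ALS iterates. -/
def IsALS {n1 n2 m : ℕ} (A : Fin m → Matrix (Fin n1) (Fin n2) ℝ)
    (y : EuclideanSpace ℝ (Fin m)) (v0 : EuclideanSpace ℝ (Fin n2))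
    (u : ℕ → EuclideanSpace ℝ (Fin n1)) (v : ℕ → EuclideanSpace ℝ (Fin n2))
    (uh : ℕ → EuclideanSpace ℝ (Fin n1)) (vh : ℕ → EuclideanSpace ℝ (Fin n2)) : Prop :=
  v 0 = v0 ∧
  ∀ t : ℕ,
    (∀ u' : EuclideanSpace ℝ (Fin n1),
      ‖y - calA A (vecMulVec (ofE (uh t)) (ofE (v t)))‖ ≤
        ‖y - calA A (vecMulVec (ofE u') (ofE (v t)))‖) ∧
    u (t + 1) = ‖uh t‖⁻¹ • uh t ∧
    (∀ v' : EuclideanSpace ℝ (Fin n2),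
      ‖y - calA A (vecMulVec (ofE (u (t + 1))) (ofE (vh t)))‖ ≤
        ‖y - calA A (vecMulVec (ofE (u (t + 1))) (ofE v'))‖) ∧
    v (t + 1) = ‖vh t‖⁻¹ • vh t

variable {n n1 n2 m : ℕ}

lemma toE_add (x y : Fin n → ℝ) : toE (x + y) = toE x + toE y := rfl
lemma toE_sub (x y : Fin n → ℝ) : toE (x - y) = toE x - toE y := rfl
lemma toE_smul (c : ℝ) (x : Fin n → ℝ) : toE (c • x) = c • toE x := rfl
lemma ofE_toE (x : Fin n → ℝ) : ofE (toE x) = x := rfl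
lemma toE_ofE (x : EuclideanSpace ℝ (Fin n)) : toE (ofE x) = x := rfl
lemma ofE_add (x y : EuclideanSpace ℝ (Fin n)) : ofE (x + y) = ofE x + ofE y := rfl
lemma ofE_sub (x y : EuclideanSpace ℝ (Fin n)) : ofE (x - y) = ofE x - ofE y := rfl
lemma ofE_smul (c : ℝ) (x : EuclideanSpace ℝ (Fin n)) : ofE (c • x) = c • ofE x := rfl

lemma inner_eq_dot (x y : EuclideanSpace ℝ (Fin n)) : ⟪x, y⟫ = ofE x ⬝ᵥ ofE y := by
  simp [PiLp.inner_apply, dotProduct, ofE, mul_comm]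

lemma norm_toE (x : Fin n → ℝ) : ‖toE x‖ = Real.sqrt (x ⬝ᵥ x) := by
  rw [@norm_eq_sqrt_real_inner]
  rw [inner_eq_dot, ofE_toE]

lemma dot_e1 (hn : 0 < n) : ofE (e1 n) ⬝ᵥ ofE (e1 n) = 1 := by
  have : ∀ i : Fin n, ((i:ℕ) = 0) = (i = ⟨0, hn⟩) := by
    intro i; simp [Fin.ext_iff]
  simp [e1, ofE_toE, dotProduct, this]

lemma fin_eq0 (hn : 0 < n) : ∀ i : Fin n, ((i:ℕ) = 0) = (i = ⟨0, hn⟩) := by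
  intro i; simp [Fin.ext_iff]

lemma norm_e1 (hn : 0 < n) : ‖e1 n‖ = 1 := by
  have := dot_e1 (n:=n) hn
  rw [e1, norm_toE]
  rw [show ((fun i : Fin n => if (i:ℕ) = 0 then (1:ℝ) else 0) ⬝ᵥ fun i => if (i:ℕ) = 0 then 1 else 0) = ofE (e1 n) ⬝ᵥ ofE (e1 n) from rfl, this, Real.sqrt_one]
  
lemma vecMulVec_mulVec' (a : Fin n1 → ℝ) (b x : Fin n2 → ℝ) :
    vecMulVec a b *ᵥ x = (b ⬝ᵥ x) • a := by
  ext i; simp only [mulVec, vecMulVec, dotProduct, Pi.smul_apply, smul_eq_mul, of_apply,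
    Finset.sum_mul, Finset.mul_sum]
  congr 1; ext j; ring

lemma frobInner_comm (A B : Matrix (Fin n1) (Fin n2) ℝ) : frobInner A B = frobInner B A := by
  simp [frobInner, mul_comm]

lemma frobInner_vecMulVec_left (a : Fin n1 → ℝ) (b : Fin n2 → ℝ) (M : Matrix (Fin n1) (Fin n2) ℝ) :
    frobInner (vecMulVec a b) M = a ⬝ᵥ (M *ᵥ b) := by
  simp only [frobInner, vecMulVec, dotProduct, mulVec, of_apply, Finset.mul_sum]
  congr 1; ext i; congr 1; ext j; ring

lemma frobInner_add_left (A B C : Matrix (Fin n1) (Fin n2) ℝ) :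
    frobInner (A + B) C = frobInner A C + frobInner B C := by
  simp [frobInner, add_mul, Finset.sum_add_distrib]

lemma frobInner_sub_left (A B C : Matrix (Fin n1) (Fin n2) ℝ) :
    frobInner (A - B) C = frobInner A C - frobInner B C := by
  simp [frobInner, sub_mul, Finset.sum_sub_distrib]

lemma frobInner_smul_left (c : ℝ) (A B : Matrix (Fin n1) (Fin n2) ℝ) :
    frobInner (c • A) B = c * frobInner A B := by
  simp [frobInner, Finset.mul_sum, mul_assoc]

lemma frobInner_vecMulVec_self (a : Fin n1 → ℝ) (b : Fin n2 → ℝ) :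
    frobInner (vecMulVec a b) (vecMulVec a b) = (a ⬝ᵥ a) * (b ⬝ᵥ b) := by
  simp only [frobInner, vecMulVec, dotProduct, of_apply]
  rw [Finset.sum_mul_sum]
  refine Finset.sum_congr rfl fun i _ => Finset.sum_congr rfl fun j _ => by ring

lemma frobInner_self_nonneg (A : Matrix (Fin n1) (Fin n2) ℝ) : 0 ≤ frobInner A A := by
  apply Finset.sum_nonneg; intro i _; apply Finset.sum_nonneg; intro j _; exact mul_self_nonneg _

lemma Dmat_add_Omat (M : Matrix (Fin n1) (Fin n2) ℝ) : Dmat M + Omat M = M := by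
  simp only [Dmat, Omat, Matrix.sub_mul, Matrix.mul_sub, Matrix.one_mul, Matrix.mul_one]
  abel

lemma calA_add (A : Fin m → Matrix (Fin n1) (Fin n2) ℝ) (X Y : Matrix (Fin n1) (Fin n2) ℝ) :
    calA A (X + Y) = calA A X + calA A Y := by
  unfold calA
  rw [← toE_add]
  congr 1; funext i
  show (Real.sqrt m)⁻¹ * frobInner (A i) (X + Y)
      = (Real.sqrt m)⁻¹ * frobInner (A i) X + (Real.sqrt m)⁻¹ * frobInner (A i) Y
  rw [frobInner_comm (A i), frobInner_add_left, frobInner_comm X, frobInner_comm Y]; ring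

lemma calA_sub (A : Fin m → Matrix (Fin n1) (Fin n2) ℝ) (X Y : Matrix (Fin n1) (Fin n2) ℝ) :
    calA A (X - Y) = calA A X - calA A Y := by
  unfold calA
  rw [← toE_sub]
  congr 1; funext i
  show (Real.sqrt m)⁻¹ * frobInner (A i) (X - Y)
      = (Real.sqrt m)⁻¹ * frobInner (A i) X - (Real.sqrt m)⁻¹ * frobInner (A i) Y
  rw [frobInner_comm (A i), frobInner_sub_left, frobInner_comm X, frobInner_comm Y]; ring

lemma calA_smul (A : Fin m → Matrix (Fin n1) (Fin n2) ℝ) (c : ℝ) (X : Matrix (Fin n1) (Fin n2) ℝ) :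
    calA A (c • X) = c • calA A X := by
  unfold calA
  rw [← toE_smul]
  congr 1; funext i
  show (Real.sqrt m)⁻¹ * frobInner (A i) (c • X)
      = c • ((Real.sqrt m)⁻¹ * frobInner (A i) X)
  rw [frobInner_comm (A i), frobInner_smul_left, frobInner_comm X]
  simp; ring

lemma calAdj_calA (A : Fin m → Matrix (Fin n1) (Fin n2) ℝ) (X : Matrix (Fin n1) (Fin n2) ℝ) :
    calAdj A (calA A X) = ∑ i, ((m : ℝ)⁻¹ * frobInner (A i) X) • A i := by
  have hs : (Real.sqrt m)⁻¹ * (Real.sqrt m)⁻¹ = (m : ℝ)⁻¹ := by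
    rw [← mul_inv, Real.mul_self_sqrt (Nat.cast_nonneg m)]
  unfold calAdj calA
  simp only [ofE_toE]
  refine Finset.sum_congr rfl fun i _ => ?_
  rw [← mul_assoc, hs]

lemma ent11_eq (hn1 : 0 < n1) (hn2 : 0 < n2) (M : Matrix (Fin n1) (Fin n2) ℝ) :
    ent11 M = ofE (e1 n1) ⬝ᵥ (M *ᵥ ofE (e1 n2)) := by
  rw [ent11, frobInner_vecMulVec_left]

lemma mulVec_Q_e1 (hn2 : 0 < n2) :
    vecMulVec (ofE (e1 n2)) (ofE (e1 n2)) *ᵥ ofE (e1 n2) = ofE (e1 n2) := by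
  rw [vecMulVec_mulVec', dot_e1 hn2, one_smul]

lemma dot_u1_P (hn1 : 0 < n1) (y : Fin n1 → ℝ) :
    ofE (e1 n1) ⬝ᵥ (vecMulVec (ofE (e1 n1)) (ofE (e1 n1)) *ᵥ y)
      = ofE (e1 n1) ⬝ᵥ y := by
  rw [vecMulVec_mulVec', dotProduct_smul, smul_eq_mul, dot_e1 hn1]
  ring

lemma ent11_Dmat (hn1 : 0 < n1) (hn2 : 0 < n2) (M : Matrix (Fin n1) (Fin n2) ℝ) :
    ent11 (Dmat M) = ent11 M := by
  rw [ent11_eq hn1 hn2, ent11_eq hn1 hn2, Dmat]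
  rw [Matrix.add_mulVec, ← Matrix.mulVec_mulVec, ← Matrix.mulVec_mulVec, mulVec_Q_e1 hn2,
    ← Matrix.mulVec_mulVec, Matrix.sub_mulVec, Matrix.one_mulVec, mulVec_Q_e1 hn2, sub_self,
    Matrix.mulVec_zero, add_zero, dot_u1_P hn1]

lemma ent11_eq_of_Dmat (hn1 : 0 < n1) (hn2 : 0 < n2) {M M' : Matrix (Fin n1) (Fin n2) ℝ}
    (h : Dmat M' = Dmat M) : ent11 M' = ent11 M := by
  rw [← ent11_Dmat hn1 hn2 M', h, ent11_Dmat hn1 hn2]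

lemma Omat_mulVec_perp (hn2 : 0 < n2) (M : Matrix (Fin n1) (Fin n2) ℝ) (z : Fin n2 → ℝ)
    (hz : ofE (e1 n2) ⬝ᵥ z = 0) :
    Omat M *ᵥ z = (ofE (e1 n1) ⬝ᵥ (M *ᵥ z)) • ofE (e1 n1) := by
  have hQz : vecMulVec (ofE (e1 n2)) (ofE (e1 n2)) *ᵥ z = 0 := by
    rw [vecMulVec_mulVec', hz, zero_smul]
  rw [Omat, Matrix.add_mulVec, ← Matrix.mulVec_mulVec, ← Matrix.mulVec_mulVec,
    Matrix.sub_mulVec, Matrix.one_mulVec, hQz, sub_zero, ← Matrix.mulVec_mulVec z _ (vecMulVec (ofE (e1 n2)) (ofE (e1 n2))),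
    hQz, Matrix.mulVec_zero, add_zero, vecMulVec_mulVec']

lemma inner_e1 (x : EuclideanSpace ℝ (Fin n)) : ⟪e1 n, x⟫ = ofE (e1 n) ⬝ᵥ ofE x :=
  inner_eq_dot _ _

lemma dot_perp (hn : 0 < n) (x : EuclideanSpace ℝ (Fin n)) :
    ofE (e1 n) ⬝ᵥ ofE (perp x) = 0 := by
  rw [perp, par, ofE_sub, dotProduct_sub, ofE_smul, dotProduct_smul, smul_eq_mul,
    dot_e1 hn, mul_one, inner_e1, sub_self]

lemma inner_par_perp (hn : 0 < n) (x : EuclideanSpace ℝ (Fin n)) : ⟪par x, perp x⟫ = 0 := by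
  rw [par, real_inner_smul_left, inner_eq_dot (e1 n) (perp x), dot_perp hn, mul_zero]

lemma norm_perp_le (hn : 0 < n) (x : EuclideanSpace ℝ (Fin n)) : ‖perp x‖ ≤ ‖x‖ := by
  have hx : x = par x + perp x := by rw [perp]; abel
  have h2 : ‖x‖ ^ 2 = ‖par x‖ ^ 2 + 2 * ⟪par x, perp x⟫ + ‖perp x‖ ^ 2 := by
    conv_lhs => rw [hx]
    exact norm_add_sq_real _ _
  rw [inner_par_perp hn, mul_zero] at h2
  have : ‖perp x‖ ^ 2 ≤ ‖x‖ ^ 2 := by nlinarith [sq_nonneg ‖par x‖]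
  exact (pow_le_pow_iff_left₀ (norm_nonneg _) (norm_nonneg _) two_ne_zero).mp this

lemma par_sub (x y : EuclideanSpace ℝ (Fin n)) : par (x - y) = par x - par y := by
  rw [par, par, par, inner_sub_right, sub_smul]

lemma perp_sub (x y : EuclideanSpace ℝ (Fin n)) : perp (x - y) = perp x - perp y := by
  rw [perp, perp, perp, par_sub]; abel

lemma norm_par (hn : 0 < n) (x : EuclideanSpace ℝ (Fin n)) : ‖par x‖ = |⟪e1 n, x⟫| := by
  rw [par, norm_smul, norm_e1 hn, mul_one, Real.norm_eq_abs]

lemma rank_vecMulVec_le (a : Fin n1 → ℝ) (b : Fin n2 → ℝ) :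
    (vecMulVec a b).rank ≤ 4 := by
  rw [vecMulVec_eq (Fin 1)]
  calc (replicateCol (Fin 1) a * replicateRow (Fin 1) b).rank ≤ (replicateCol (Fin 1) a).rank := rank_mul_le_left _ _
    _ ≤ Fintype.card (Fin 1) := rank_le_card_width _
    _ ≤ 4 := by simp

lemma vecMulVec_add_right (a : Fin n1 → ℝ) (b c : Fin n2 → ℝ) :
    vecMulVec a (b + c) = vecMulVec a b + vecMulVec a c := by
  ext i j; simp [vecMulVec, mul_add]

lemma vecMulVec_sub_right (a : Fin n1 → ℝ) (b c : Fin n2 → ℝ) :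
    vecMulVec a (b - c) = vecMulVec a b - vecMulVec a c := by
  ext i j; simp [vecMulVec, mul_sub]

lemma vecMulVec_smul_right (a : Fin n1 → ℝ) (t : ℝ) (b : Fin n2 → ℝ) :
    vecMulVec a (t • b) = t • vecMulVec a b := by
  ext i j; simp [vecMulVec]; ring

lemma frobNorm_sq_vecMulVec (a : Fin n1 → ℝ) (b : Fin n2 → ℝ) :
    frobNorm (vecMulVec a b) ^ 2 = (a ⬝ᵥ a) * (b ⬝ᵥ b) := by
  rw [frobNorm, Real.sq_sqrt (frobInner_self_nonneg _), frobInner_vecMulVec_self]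

lemma rip_cross (hn1 : 0 < n1) (hn2 : 0 < n2) {δ : ℝ} (hδ : 0 ≤ δ)
    {A : Fin m → Matrix (Fin n1) (Fin n2) ℝ} (hA : HasRIP A δ)
    (z : Fin n2 → ℝ) (hz : ofE (e1 n2) ⬝ᵥ z = 0) :
    |⟪calA A (vecMulVec (ofE (e1 n1)) (ofE (e1 n2))),
      calA A (vecMulVec (ofE (e1 n1)) z)⟫| ≤ δ * Real.sqrt (z ⬝ᵥ z) := by
  by_cases hz0 : z = 0
  · subst hz0
    have : vecMulVec (ofE (e1 n1)) (0 : Fin n2 → ℝ) = 0 := by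
      ext i j; simp [vecMulVec]
    rw [this]
    have hc0 : calA A (0 : Matrix (Fin n1) (Fin n2) ℝ) = (0 : EuclideanSpace ℝ (Fin m)) := by
      have := calA_smul A 0 (0 : Matrix (Fin n1) (Fin n2) ℝ)
      simpa using this
    rw [hc0, inner_zero_right, abs_zero]
    positivity
  · have hnn : 0 ≤ z ⬝ᵥ z := Finset.sum_nonneg fun i _ => mul_self_nonneg _
    have hne : z ⬝ᵥ z ≠ 0 := fun h => hz0 (dotProduct_self_eq_zero.mp h)
    have hzz : 0 < z ⬝ᵥ z := lt_of_le_of_ne hnn (Ne.symm hne)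
    set r : ℝ := Real.sqrt (z ⬝ᵥ z) with hr
    have hrpos : 0 < r := Real.sqrt_pos.mpr hzz
    have hr2 : r * r = z ⬝ᵥ z := Real.mul_self_sqrt hnn
    set z' : Fin n2 → ℝ := r⁻¹ • z with hz'
    set u1 : Fin n1 → ℝ := ofE (e1 n1)
    set w1 : Fin n2 → ℝ := ofE (e1 n2)
    set p : EuclideanSpace ℝ (Fin m) := calA A (vecMulVec u1 w1) with hp
    set q : EuclideanSpace ℝ (Fin m) := calA A (vecMulVec u1 z') with hq
    have hw1z' : w1 ⬝ᵥ z' = 0 := by rw [hz', dotProduct_smul, hz, smul_zero]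
    have hz'z' : z' ⬝ᵥ z' = 1 := by
      rw [hz', smul_dotProduct, dotProduct_smul, smul_eq_mul, smul_eq_mul, ← mul_assoc,
        ← hr2]
      field_simp
    have hpq : ∀ (s : ℝ), s = 1 ∨ s = -1 →
        frobNorm (vecMulVec u1 (w1 + s • z')) ^ 2 = 2 := by
      intro s hs
      rw [frobNorm_sq_vecMulVec, dot_e1 hn1, one_mul, dotProduct_add, add_dotProduct,
        add_dotProduct, dot_e1 hn2, dotProduct_smul, hw1z', smul_dotProduct,
        dotProduct_comm z' w1, hw1z', smul_dotProduct, dotProduct_smul, hz'z']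
      rcases hs with h | h <;> rw [h] <;> norm_num
    have key : ∀ (s : ℝ), s = 1 ∨ s = -1 →
        (1 - δ) * 2 ≤ ‖p + s • q‖ ^ 2 ∧ ‖p + s • q‖ ^ 2 ≤ (1 + δ) * 2 := by
      intro s hs
      have : p + s • q = calA A (vecMulVec u1 (w1 + s • z')) := by
        rw [vecMulVec_add_right, vecMulVec_smul_right, calA_add, calA_smul]
      rw [this, ← hpq s hs]
      exact hA _ (rank_vecMulVec_le _ _)
    have h1 := key 1 (Or.inl rfl)
    have h2 := key (-1) (Or.inr rfl)
    rw [one_smul] at h1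
    rw [neg_one_smul, ← sub_eq_add_neg] at h2
    have hinner : ⟪p, q⟫ = (‖p + q‖ ^ 2 - ‖p - q‖ ^ 2) / 4 := by
      rw [norm_add_sq_real, norm_sub_sq_real]; ring
    have habs : |⟪p, q⟫| ≤ δ := by
      rw [hinner, abs_le]
      constructor <;> nlinarith [h1.1, h1.2, h2.1, h2.2]
    have hZq : calA A (vecMulVec u1 z) = r • q := by
      rw [hq, ← calA_smul, ← vecMulVec_smul_right, hz', smul_smul,
        mul_inv_cancel₀ (ne_of_gt hrpos), one_smul]
    rw [hZq, real_inner_smul_right, abs_mul, abs_of_pos hrpos]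
    calc r * |⟪p, q⟫| ≤ r * δ := by
          exact mul_le_mul_of_nonneg_left habs (le_of_lt hrpos)
      _ = δ * r := mul_comm _ _

lemma sum_mulVec' {ι : Type*} (s : Finset ι) (M : ι → Matrix (Fin n1) (Fin n2) ℝ)
    (x : Fin n2 → ℝ) : (∑ i ∈ s, M i) *ᵥ x = ∑ i ∈ s, M i *ᵥ x := by
  induction s using Finset.cons_induction with
  | empty => simp [Matrix.zero_mulVec]
  | cons a s ha ih => rw [Finset.sum_cons, Finset.sum_cons, Matrix.add_mulVec, ih]

lemma norm_E_zero (x : EuclideanSpace ℝ (Fin 0)) : ‖x‖ = 0 := by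
  have : x = toE (ofE x) := rfl
  rw [this, norm_toE]
  rw [show ofE x ⬝ᵥ ofE x = 0 from by simp [dotProduct, Finset.univ_eq_empty], Real.sqrt_zero]

set_option maxHeartbeats 1000000 in
/-- Lemma `stochasticbound`. -/
theorem statement7 (K : ℝ) (hK : 1 ≤ K) :
    ∃ C : ℝ, 0 < C ∧
      ∀ (n1 n2 m : ℕ) (T : ℕ) (η δ : ℝ), 0 < η → 0 < δ → δ < 1 →
      ∀ (A At : Fin m → Matrix (Fin n1) (Fin n2) ℝ),
      (∀ i, Dmat (At i) = Dmat (A i)) →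
      ∀ (v vt : EuclideanSpace ℝ (Fin n2)), ‖v‖ = 1 → ‖vt‖ = 1 →
      HasRIP A δ → HasRIP At δ →
      (1 / (m : ℝ)) * ‖toE ((∑ i, ent11 (A i) • Omat (A i)) *ᵥ ofE (e1 n2))‖
          ≤ 4 * Real.sqrt (n1 / m) →
      (1 / (m : ℝ)) * ‖toE ((∑ i, ent11 (A i) • Omat (At i)) *ᵥ ofE (e1 n2))‖
          ≤ 4 * Real.sqrt (n1 / m) →
      (1 / (m : ℝ)) * ‖toE ((∑ i, ent11 (A i) • Omat (A i)) *ᵥ ofE (perp vt))‖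
          ≤ K * Real.sqrt ((Real.log T + Real.log η) / m) * ‖perp vt‖ →
      (1 / (m : ℝ)) * ‖toE ((∑ i, ent11 (A i) • Omat (At i)) *ᵥ ofE (perp v))‖
          ≤ K * Real.sqrt ((Real.log T + Real.log η) / m) * ‖perp vt‖ →
      ‖toE ((calAdj A (calA A (vecMulVec (ofE (e1 n1)) (ofE (e1 n2))))
            - calAdj At (calA At (vecMulVec (ofE (e1 n1)) (ofE (e1 n2))))) *ᵥ ofE vt)‖
        ≤ C * (Real.sqrt ((Real.log T + Real.log η) / m)
              + Real.sqrt (n1 / m) * ‖par vt‖)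
          + δ * ‖v - vt‖ := by
  refine ⟨8 * K, by linarith, ?_⟩
  intro n1 n2 m T η δ hη hδ hδ1 A At hD v vt hv hvt hA hAt hb1 hb2 hb3 hb4
  set q : ℝ := Real.sqrt ((Real.log T + Real.log η) / m) with hqdef
  set p : ℝ := Real.sqrt ((n1 : ℝ) / m) with hpdef
  have hq0 : 0 ≤ q := Real.sqrt_nonneg _
  have hp0 : 0 ≤ p := Real.sqrt_nonneg _
  have hpar0 : 0 ≤ ‖par vt‖ := norm_nonneg _
  have hvvt0 : 0 ≤ δ * ‖v - vt‖ := mul_nonneg hδ.le (norm_nonneg _)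
  -- n2 is positive
  have hn2 : 0 < n2 := by
    rcases Nat.eq_zero_or_pos n2 with h0 | h; swap
    · exact h
    · exfalso
      subst h0
      rw [norm_E_zero v] at hv
      norm_num at hv
  -- dispatch the degenerate case n1 = 0
  rcases Nat.eq_zero_or_pos n1 with hn1 | hn1
  · subst hn1
    rw [norm_E_zero]
    have h1 : 0 ≤ 8 * K * (q + p * ‖par vt‖) :=
      mul_nonneg (by linarith) (by positivity)
    linarith
  -- main case
  have hent : ∀ i, ent11 (At i) = ent11 (A i) := fun i => ent11_eq_of_Dmat hn1 hn2 (hD i)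
  set u1 : Fin n1 → ℝ := ofE (e1 n1) with hu1
  set w1 : Fin n2 → ℝ := ofE (e1 n2) with hw1
  set Y : Matrix (Fin n1) (Fin n2) ℝ := vecMulVec u1 w1 with hY
  set N : Matrix (Fin n1) (Fin n2) ℝ := ∑ i, ent11 (A i) • Omat (A i) with hN
  set Nt : Matrix (Fin n1) (Fin n2) ℝ := ∑ i, ent11 (A i) • Omat (At i) with hNt
  have hfY : ∀ i, frobInner (A i) Y = ent11 (A i) := by
    intro i; rw [frobInner_comm]; rfl
  have hfYt : ∀ i, frobInner (At i) Y = ent11 (A i) := by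
    intro i; rw [frobInner_comm]; exact hent i
  have hAiOi : ∀ i, A i - At i = Omat (A i) - Omat (At i) := by
    intro i
    have h1 := Dmat_add_Omat (A i)
    have h2 := Dmat_add_Omat (At i)
    rw [hD i] at h2
    calc A i - At i = (Dmat (A i) + Omat (A i)) - (Dmat (A i) + Omat (At i)) := by
          rw [h1, h2]
      _ = Omat (A i) - Omat (At i) := by abel
  have hsplit : calAdj A (calA A Y) - calAdj At (calA At Y) = (m : ℝ)⁻¹ • (N - Nt) := by
    rw [calAdj_calA, calAdj_calA]
    have lhs_eq : (∑ i, ((m : ℝ)⁻¹ * frobInner (A i) Y) • A i)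
        - (∑ i, ((m : ℝ)⁻¹ * frobInner (At i) Y) • At i)
        = ∑ i, ((m : ℝ)⁻¹ * ent11 (A i)) • (A i - At i) := by
      rw [← Finset.sum_sub_distrib]
      refine Finset.sum_congr rfl fun i _ => ?_
      rw [hfY i, hfYt i, smul_sub]
    rw [lhs_eq]
    rw [hN, hNt, ← Finset.sum_sub_distrib, Finset.smul_sum]
    refine Finset.sum_congr rfl fun i _ => ?_
    rw [hAiOi i, ← smul_sub, smul_smul]
  rw [hsplit, Matrix.smul_mulVec, Matrix.sub_mulVec]
  -- split vt
  have hvt_split : ofE vt = ofE (par vt) + ofE (perp vt) := by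
    rw [perp, ofE_sub]; abel
  have hperp_split : ofE (perp vt) = ofE (perp v) + (ofE (perp vt) - ofE (perp v)) := by
    abel
  set zz : Fin n2 → ℝ := ofE (perp vt) - ofE (perp v) with hzz
  have hmain : N *ᵥ ofE vt - Nt *ᵥ ofE vt
      = (N *ᵥ ofE (par vt) + N *ᵥ ofE (perp vt))
        - (Nt *ᵥ ofE (par vt) + (Nt *ᵥ ofE (perp v) + Nt *ᵥ zz)) := by
    conv_lhs => rw [hvt_split]
    rw [Matrix.mulVec_add, Matrix.mulVec_add]
    congr 1
    conv_lhs => rw [hperp_split]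
    rw [Matrix.mulVec_add]
  rw [hmain]
  set a1 : EuclideanSpace ℝ (Fin n1) := toE (N *ᵥ ofE (par vt)) with ha1
  set a2 : EuclideanSpace ℝ (Fin n1) := toE (N *ᵥ ofE (perp vt)) with ha2
  set b1 : EuclideanSpace ℝ (Fin n1) := toE (Nt *ᵥ ofE (par vt)) with hb1'
  set b2 : EuclideanSpace ℝ (Fin n1) := toE (Nt *ᵥ ofE (perp v)) with hb2'
  set b3 : EuclideanSpace ℝ (Fin n1) := toE (Nt *ᵥ zz) with hb3'
  have hEnorm : ‖toE ((m : ℝ)⁻¹ • ((N *ᵥ ofE (par vt) + N *ᵥ ofE (perp vt))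
        - (Nt *ᵥ ofE (par vt) + (Nt *ᵥ ofE (perp v) + Nt *ᵥ zz))))‖
      = (m : ℝ)⁻¹ * ‖a1 + a2 - (b1 + (b2 + b3))‖ := by
    rw [toE_smul, toE_sub, toE_add, toE_add, toE_add, norm_smul, Real.norm_eq_abs,
      abs_of_nonneg (by positivity : (0:ℝ) ≤ ((m:ℝ))⁻¹)]
  rw [hEnorm]
  have htri : ‖a1 + a2 - (b1 + (b2 + b3))‖
      ≤ ‖a1‖ + ‖a2‖ + ‖b1‖ + ‖b2‖ + ‖b3‖ := by
    calc ‖a1 + a2 - (b1 + (b2 + b3))‖ ≤ ‖a1 + a2‖ + ‖b1 + (b2 + b3)‖ := norm_sub_le _ _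
      _ ≤ (‖a1‖ + ‖a2‖) + (‖b1‖ + (‖b2‖ + ‖b3‖)) := by
          gcongr <;> first | exact norm_add_le _ _ |
            (exact le_trans (norm_add_le _ _) (by gcongr; exact norm_add_le _ _))
      _ = ‖a1‖ + ‖a2‖ + ‖b1‖ + ‖b2‖ + ‖b3‖ := by ring
  have hm0 : (0:ℝ) ≤ ((m:ℝ))⁻¹ := by positivity
  have hone : (1 : ℝ) / (m : ℝ) = ((m:ℝ))⁻¹ := one_div _
  rw [hone] at hb1 hb2 hb3 hb4
  -- bound for a1
  have hofpar : ofE (par vt) = ⟪e1 n2, vt⟫ • w1 := by rw [par, ofE_smul]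
  have hA1 : (m:ℝ)⁻¹ * ‖a1‖ ≤ 4 * p * ‖par vt‖ := by
    rw [ha1, hofpar, Matrix.mulVec_smul, toE_smul, norm_smul, Real.norm_eq_abs,
      ← norm_par hn2]
    calc (m:ℝ)⁻¹ * (‖par vt‖ * ‖toE (N *ᵥ w1)‖)
        = ‖par vt‖ * ((m:ℝ)⁻¹ * ‖toE (N *ᵥ w1)‖) := by ring
      _ ≤ ‖par vt‖ * (4 * p) := mul_le_mul_of_nonneg_left hb1 hpar0
      _ = 4 * p * ‖par vt‖ := by ring
  have hB1 : (m:ℝ)⁻¹ * ‖b1‖ ≤ 4 * p * ‖par vt‖ := by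
    rw [hb1', hofpar, Matrix.mulVec_smul, toE_smul, norm_smul, Real.norm_eq_abs,
      ← norm_par hn2]
    calc (m:ℝ)⁻¹ * (‖par vt‖ * ‖toE (Nt *ᵥ w1)‖)
        = ‖par vt‖ * ((m:ℝ)⁻¹ * ‖toE (Nt *ᵥ w1)‖) := by ring
      _ ≤ ‖par vt‖ * (4 * p) := mul_le_mul_of_nonneg_left hb2 hpar0
      _ = 4 * p * ‖par vt‖ := by ring
  have hA2 : (m:ℝ)⁻¹ * ‖a2‖ ≤ K * q * ‖perp vt‖ := hb3
  have hB2 : (m:ℝ)⁻¹ * ‖b2‖ ≤ K * q * ‖perp vt‖ := hb4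
  -- bound for b3 via RIP
  have hzzperp : zz = ofE (perp (vt - v)) := by rw [perp_sub, ofE_sub, hzz]
  have hdotzz : w1 ⬝ᵥ zz = 0 := by rw [hzzperp, hw1]; exact dot_perp hn2 _
  have hb3vec : Nt *ᵥ zz = (∑ i, ent11 (A i) * (u1 ⬝ᵥ (At i *ᵥ zz))) • u1 := by
    rw [hNt, sum_mulVec']
    have hterm : ∀ i : Fin m, (ent11 (A i) • Omat (At i)) *ᵥ zz
        = (ent11 (A i) * (u1 ⬝ᵥ (At i *ᵥ zz))) • u1 := by
      intro i
      rw [Matrix.smul_mulVec, Omat_mulVec_perp hn2 _ _ hdotzz, smul_smul]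
    rw [Finset.sum_congr rfl fun i _ => hterm i, ← Finset.sum_smul]
  set s' : ℝ := ∑ i, ent11 (A i) * (u1 ⬝ᵥ (At i *ᵥ zz)) with hs'
  have hnormb3 : ‖b3‖ = |s'| := by
    rw [hb3', hb3vec, toE_smul, norm_smul, Real.norm_eq_abs]
    rw [hu1, toE_ofE, norm_e1 hn1, mul_one]
  have hsm : (Real.sqrt m)⁻¹ * (Real.sqrt m)⁻¹ = (m : ℝ)⁻¹ := by
    rw [← mul_inv, Real.mul_self_sqrt (Nat.cast_nonneg m)]
  have hinner : ⟪calA At Y, calA At (vecMulVec u1 zz)⟫ = (m:ℝ)⁻¹ * s' := by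
    rw [inner_eq_dot]
    unfold calA
    rw [ofE_toE, ofE_toE]
    unfold dotProduct
    rw [hs', Finset.mul_sum]
    refine Finset.sum_congr rfl fun i _ => ?_
    dsimp only
    rw [hfYt i, frobInner_comm, frobInner_vecMulVec_left]
    rw [← hsm]; ring
  have hB3 : (m:ℝ)⁻¹ * ‖b3‖ ≤ δ * ‖v - vt‖ := by
    rw [hnormb3, ← abs_of_nonneg hm0, ← abs_mul, ← hinner]
    have hrc := rip_cross hn1 hn2 hδ.le hAt zz (by rw [← hw1]; exact hdotzz)
    rw [← hu1, ← hY] at hrc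
    have hzznorm : Real.sqrt (zz ⬝ᵥ zz) = ‖perp (vt - v)‖ := by
      rw [← norm_toE, hzzperp, toE_ofE]
    rw [hzznorm] at hrc
    calc |⟪calA At Y, calA At (vecMulVec u1 zz)⟫| ≤ δ * ‖perp (vt - v)‖ := hrc
      _ ≤ δ * ‖vt - v‖ := mul_le_mul_of_nonneg_left (norm_perp_le hn2 _) hδ.le
      _ = δ * ‖v - vt‖ := by rw [norm_sub_rev]
  have hperp1 : ‖perp vt‖ ≤ 1 := by
    have := norm_perp_le hn2 vt; rwa [hvt] at this
  have hKq0 : 0 ≤ K * q := mul_nonneg (by linarith) hq0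
  have hKqp : K * q * ‖perp vt‖ ≤ K * q := mul_le_of_le_one_right hKq0 hperp1
  calc (m:ℝ)⁻¹ * ‖a1 + a2 - (b1 + (b2 + b3))‖
      ≤ (m:ℝ)⁻¹ * (‖a1‖ + ‖a2‖ + ‖b1‖ + ‖b2‖ + ‖b3‖) :=
        mul_le_mul_of_nonneg_left htri hm0
    _ = (m:ℝ)⁻¹ * ‖a1‖ + (m:ℝ)⁻¹ * ‖a2‖ + (m:ℝ)⁻¹ * ‖b1‖ + (m:ℝ)⁻¹ * ‖b2‖
        + (m:ℝ)⁻¹ * ‖b3‖ := by ring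
    _ ≤ (4 * p * ‖par vt‖) + (K * q * ‖perp vt‖) + (4 * p * ‖par vt‖)
        + (K * q * ‖perp vt‖) + (δ * ‖v - vt‖) := by
        gcongr
    _ ≤ 8 * K * (q + p * ‖par vt‖) + δ * ‖v - vt‖ := by
        nlinarith [mul_nonneg hp0 hpar0, hq0, hKqp, hKq0]

end ALSPaper
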